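/- For every integer k > 10, the sum over j from 0 to log*(k) - 1 of (log^{(j)} k)^{-1/2} is bounded above by a constant independent of k; in fact sup_{k>10} Σ_{j=0}^{log*k - 1} (log^{(j)} k)^{-1/2} < ∞. -/

import Mathlib

/-- `iterlog k j = log^{(j)} k`, the `j`-fold iterated logarithm of `k`. -/
noncomputable def iterlog (k : ℝ) : ℕ → ℝ
  | 0 => k
  | j + 1 => Real.log (iterlog k j)

/-- `logstar k = log* k = min {j > 0 : log^{(j)} k ≤ 10}`. -/
noncomputable def logstar (k : ℝ) : ℕ := sInf {j : ℕ | 0 < j ∧ iterlog k j ≤ 10}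

lemma key_ineq (x : ℝ) (hx : 10 ≤ x) :
    3 * (Real.exp x) ^ (-(1 / 2) : ℝ) ≤ 2 * x ^ (-(1 / 2) : ℝ) := by
  have hx0 : (0:ℝ) < x := by linarith
  have hex : (0:ℝ) < Real.exp x := Real.exp_pos x
  have h1 : Real.exp (x / 2) ≥ x / 2 + 1 := Real.add_one_le_exp (x / 2)
  have h2 : 9 * x ≤ 4 * Real.exp x := by
    have : Real.exp x = Real.exp (x / 2) * Real.exp (x / 2) := by
      rw [← Real.exp_add]; ring_nf
    nlinarith [Real.exp_pos (x / 2)]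
  rw [Real.rpow_neg hex.le, Real.rpow_neg hx0.le,
    show ((1:ℝ)/2) = (2:ℝ)⁻¹ by norm_num]
  have hsx : Real.exp x ^ ((2:ℝ)⁻¹) = Real.sqrt (Real.exp x) := by
    rw [Real.sqrt_eq_rpow]; norm_num
  have hsx2 : x ^ ((2:ℝ)⁻¹) = Real.sqrt x := by
    rw [Real.sqrt_eq_rpow]; norm_num
  rw [hsx, hsx2]
  have hsxpos : 0 < Real.sqrt (Real.exp x) := Real.sqrt_pos.mpr hex
  have hsxpos2 : 0 < Real.sqrt x := Real.sqrt_pos.mpr hx0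
  have : Real.sqrt (9 * x) ≤ Real.sqrt (4 * Real.exp x) := Real.sqrt_le_sqrt h2
  rw [Real.sqrt_mul (by norm_num) x, Real.sqrt_mul (by norm_num) (Real.exp x),
    show Real.sqrt 9 = 3 by rw [show (9:ℝ) = 3^2 by norm_num, Real.sqrt_sq (by norm_num)],
    show Real.sqrt 4 = 2 by rw [show (4:ℝ) = 2^2 by norm_num, Real.sqrt_sq (by norm_num)]] at this
  rw [mul_inv_le_iff₀ hsxpos,
    show 2 * (Real.sqrt x)⁻¹ * Real.sqrt (Real.exp x)
      = 2 * Real.sqrt (Real.exp x) / Real.sqrt x by ring,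
    le_div_iff₀ hsxpos2]
  linarith

lemma main_ind (n : ℕ) : ∀ k : ℝ, (∀ j ≤ n, 10 < iterlog k j) →
    ∑ j ∈ Finset.range (n + 1), (iterlog k j) ^ (-(1 / 2) : ℝ)
      ≤ 3 * (iterlog k n) ^ (-(1 / 2) : ℝ) := by
  induction n with
  | zero =>
    intro k h
    have h0 : (0:ℝ) < iterlog k 0 := by have := h 0 le_rfl; linarith
    have := Real.rpow_nonneg h0.le (-(1/2) : ℝ)
    simp [Finset.sum_range_one]
    linarith
  | succ n ih =>
    intro k h
    have h1 := ih k (fun j hj => h j (hj.trans (Nat.le_succ n)))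
    rw [Finset.sum_range_succ]
    have hn1 : 10 < iterlog k (n + 1) := h (n + 1) le_rfl
    have hn : 10 < iterlog k n := h n (Nat.le_succ n)
    have hexp : Real.exp (iterlog k (n + 1)) = iterlog k n := by
      show Real.exp (Real.log (iterlog k n)) = iterlog k n
      exact Real.exp_log (by linarith)
    have hkey := key_ineq (iterlog k (n + 1)) hn1.le
    rw [hexp] at hkey
    linarith

/-- `sup_{k > 10} ∑_{j=0}^{log* k - 1} (log^{(j)} k)^{-1/2} < ∞`. -/
theorem sum_iterlog_inv_sqrt_bounded :
    ∃ C : ℝ, ∀ k : ℕ, 10 < k →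
      ∑ j ∈ Finset.range (logstar k), (iterlog k j) ^ (-(1 / 2) : ℝ) ≤ C := by
  use 1
  intro k hk
  cases hL : logstar (k : ℝ) with
  | zero => simp
  | succ n =>
    have hjs : ∀ j ≤ n, 10 < iterlog (k : ℝ) j := by
      intro j hj
      rcases Nat.eq_zero_or_pos j with rfl | hjpos
      · show (10:ℝ) < (k:ℝ)
        exact_mod_cast hk
      · have hlt : j < sInf {j : ℕ | 0 < j ∧ iterlog (k:ℝ) j ≤ 10} := by
          rw [show sInf {j : ℕ | 0 < j ∧ iterlog (k:ℝ) j ≤ 10} = logstar (k:ℝ) from rfl, hL]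
          omega
        have := Nat.notMem_of_lt_sInf hlt
        simp only [Set.mem_setOf_eq, not_and, not_le] at this
        exact this hjpos
    have h1 := main_ind n (k : ℝ) hjs
    have hn : 10 < iterlog (k : ℝ) n := hjs n le_rfl
    have h2 : (iterlog (k:ℝ) n) ^ (-(1/2) : ℝ) ≤ 1 / 3 := by
      rw [Real.rpow_neg (by linarith)]
      rw [show ((1:ℝ)/2) = (2:ℝ)⁻¹ by norm_num]
      have hs : iterlog (k:ℝ) n ^ ((2:ℝ)⁻¹) = Real.sqrt (iterlog (k:ℝ) n) := by
        rw [Real.sqrt_eq_rpow]; norm_num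
      rw [hs]
      have h3 : (3:ℝ) ≤ Real.sqrt (iterlog (k:ℝ) n) := by
        rw [show (3:ℝ) = Real.sqrt 9 by
          rw [show (9:ℝ) = 3^2 by norm_num, Real.sqrt_sq (by norm_num)]]
        exact Real.sqrt_le_sqrt (by linarith)
      rw [inv_le_comm₀ (by positivity) (by norm_num)]
      simpa using h3
    calc ∑ j ∈ Finset.range (n + 1), (iterlog (k:ℝ) j) ^ (-(1/2) : ℝ)
        ≤ 3 * (iterlog (k:ℝ) n) ^ (-(1/2) : ℝ) := h1
      _ ≤ 3 * (1 / 3) := by linarith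
      _ ≤ 1 := by norm_num
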